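/- For f(x) = exp(a · x) with fixed a ∈ ℝ^D, the Bernstein–Bézier approximants satisfy the relative error bound: there is a constant K with |B_n(f; x) − exp(a·x)| / exp(a·x) ≤ K/n + O(1/n²) uniformly in x ∈ T. -/

import Mathlib

open Finset

/-- Standard dot product on `ℝ^D`. -/
noncomputable def dotp {D : ℕ} (a y : Fin D → ℝ) : ℝ := ∑ i, a i * y i

/-- The degree-`n` Bernstein–Bézier approximant of `f` on the simplex with vertices
`x₀, …, x_D`, expressed via the barycentric coordinate functions `s`:
`B_n(f; y) = ∑_{|k| = n} f(∑ⱼ (kⱼ/n) xⱼ) (n choose k₀,…,k_D) ∏ⱼ sⱼ(y)^{kⱼ}`. -/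
noncomputable def bezier {D : ℕ} (x : Fin (D + 1) → (Fin D → ℝ))
    (s : (Fin D → ℝ) → Fin (D + 1) → ℝ) (f : (Fin D → ℝ) → ℝ) (n : ℕ)
    (y : Fin D → ℝ) : ℝ :=
  ∑ k ∈ Finset.piAntidiag (Finset.univ : Finset (Fin (D + 1))) n,
    f (∑ j, ((k j : ℝ) / n) • x j) *
      ((Nat.multinomial Finset.univ k : ℝ) * ∏ j, (s y j) ^ (k j))

lemma dotp_sum {D m : ℕ} (a : Fin D → ℝ) (t : Fin m → ℝ) (x : Fin m → (Fin D → ℝ)) :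
    dotp a (∑ j, t j • x j) = ∑ j, t j * dotp a (x j) := by
  simp only [dotp, Finset.sum_apply, Pi.smul_apply, smul_eq_mul, Finset.mul_sum]
  rw [Finset.sum_comm]
  refine Finset.sum_congr rfl fun j _ => Finset.sum_congr rfl fun i _ => by ring

lemma exp_sub_one_le' {t : ℝ} : Real.exp t - 1 ≤ t * Real.exp t := by
  have h1 := Real.add_one_le_exp (-t)
  rw [Real.exp_neg] at h1
  have h2 := Real.exp_pos t
  have h3 : Real.exp t * (Real.exp t)⁻¹ = 1 := mul_inv_cancel₀ (ne_of_gt h2)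
  nlinarith

lemma bezier_exp {D : ℕ} (x : Fin (D + 1) → (Fin D → ℝ))
    (s : (Fin D → ℝ) → Fin (D + 1) → ℝ) (a : Fin D → ℝ) (n : ℕ) (y : Fin D → ℝ) :
    bezier x s (fun z => Real.exp (dotp a z)) n y
      = (∑ j, s y j * Real.exp (dotp a (x j) / n)) ^ n := by
  rw [Finset.sum_pow_eq_sum_piAntidiag, bezier]
  refine Finset.sum_congr rfl fun k hk => ?_
  rw [dotp_sum]
  have h : Real.exp (∑ j, (k j : ℝ) / n * dotp a (x j))
      = ∏ j, Real.exp (dotp a (x j) / n) ^ (k j) := by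
    rw [Real.exp_sum]
    refine Finset.prod_congr rfl fun j _ => ?_
    rw [← Real.exp_nat_mul]
    congr 1; ring
  rw [h]
  simp_rw [mul_pow, Finset.prod_mul_distrib]
  ring

/-- for `f(y) = exp (a ⬝ y)`, the Bernstein–Bézier approximants satisfy
the relative error bound `|B_n(f; y) − exp(a⬝y)| / exp(a⬝y) ≤ K/n + C/n²` uniformly on
`T`, for large `n`. -/
theorem stmt14 {D : ℕ} (x : Fin (D + 1) → (Fin D → ℝ)) (hx : AffineIndependent ℝ x)
    (T : Set (Fin D → ℝ)) (hT : T = convexHull ℝ (Set.range x))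
    (s : (Fin D → ℝ) → Fin (D + 1) → ℝ)
    (hs_sum : ∀ y ∈ T, ∑ j, s y j = 1)
    (hs_nonneg : ∀ y ∈ T, ∀ j, 0 ≤ s y j)
    (hs_rep : ∀ y ∈ T, ∑ j, s y j • x j = y)
    (a : Fin D → ℝ) :
    ∃ (K C : ℝ) (N : ℕ), ∀ n : ℕ, N ≤ n → ∀ y ∈ T,
      |bezier x s (fun z => Real.exp (dotp a z)) n y - Real.exp (dotp a y)| /
          Real.exp (dotp a y) ≤ K / n + C / (n : ℝ) ^ 2 := by
  set c : Fin (D + 1) → ℝ := fun j => dotp a (x j) with hc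
  set R : ℝ := 2 * (∑ j, |c j|) + 1 with hR
  have hR1 : 1 ≤ R := by
    have : (0:ℝ) ≤ ∑ j, |c j| := Finset.sum_nonneg fun j _ => abs_nonneg _
    linarith
  refine ⟨R ^ 2 * Real.exp (R ^ 2), 0, ⌈R⌉₊, fun n hn y hy => ?_⟩
  have hnR : R ≤ (n : ℝ) := (Nat.ceil_le.mp hn).trans_eq rfl |>.trans_eq rfl
  have hn1 : (1:ℝ) ≤ (n : ℝ) := le_trans hR1 hnR
  have hnpos : (0:ℝ) < (n : ℝ) := lt_of_lt_of_le one_pos hn1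
  -- barycentric value of dotp
  have hcy : dotp a y = ∑ j, s y j * c j := by
    conv_lhs => rw [← hs_rep y hy]
    rw [dotp_sum]
  -- bounds on coefficients
  have hs1 : ∀ j, s y j ≤ 1 := by
    intro j
    rw [← hs_sum y hy]
    exact Finset.single_le_sum (fun i _ => hs_nonneg y hy i) (Finset.mem_univ j)
  have habs : ∀ j, |c j - dotp a y| ≤ R := by
    intro j
    have h1 : |c j| ≤ ∑ i, |c i| :=
      Finset.single_le_sum (fun i _ => abs_nonneg (c i)) (Finset.mem_univ j)
    have h2 : |dotp a y| ≤ ∑ i, |c i| := by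
      rw [hcy]
      refine (Finset.abs_sum_le_sum_abs _ _).trans (Finset.sum_le_sum fun i _ => ?_)
      rw [abs_mul]
      calc |s y i| * |c i| = s y i * |c i| := by rw [abs_of_nonneg (hs_nonneg y hy i)]
        _ ≤ 1 * |c i| := by
            exact mul_le_mul_of_nonneg_right (hs1 i) (abs_nonneg _)
        _ = |c i| := one_mul _
    calc |c j - dotp a y| ≤ |c j| + |dotp a y| := abs_sub _ _
      _ ≤ R := by rw [hR]; linarith
  set u : Fin (D + 1) → ℝ := fun j => (c j - dotp a y) / n with hu
  have huabs : ∀ j, |u j| ≤ R / n := by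
    intro j
    rw [hu]
    simp only [abs_div, abs_of_pos hnpos]
    gcongr
    exact habs j
  have hu1 : ∀ j, |u j| ≤ 1 := fun j =>
    (huabs j).trans (by rw [div_le_one hnpos]; exact hnR)
  set δ : ℝ := ∑ j, s y j * (Real.exp (u j) - 1 - u j) with hδ
  have hδ0 : 0 ≤ δ := Finset.sum_nonneg fun j _ => by
    have := Real.add_one_le_exp (u j)
    have := hs_nonneg y hy j
    nlinarith
  have hδle : δ ≤ R ^ 2 / (n : ℝ) ^ 2 := by
    calc δ ≤ ∑ j, s y j * (R / n) ^ 2 := by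
          refine Finset.sum_le_sum fun j _ => ?_
          refine mul_le_mul_of_nonneg_left ?_ (hs_nonneg y hy j)
          have h1 := Real.abs_exp_sub_one_sub_id_le (hu1 j)
          have h2 : (u j) ^ 2 ≤ (R / n) ^ 2 := by
            rw [← sq_abs]
            exact pow_le_pow_left₀ (abs_nonneg _) (huabs j) 2
          calc Real.exp (u j) - 1 - u j ≤ |Real.exp (u j) - 1 - u j| := le_abs_self _
            _ ≤ (u j) ^ 2 := h1
            _ ≤ (R / n) ^ 2 := h2
      _ = (R / n) ^ 2 := by rw [← Finset.sum_mul, hs_sum y hy, one_mul]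
      _ = R ^ 2 / (n : ℝ) ^ 2 := div_pow R n 2
  -- key identity
  have hsumu : ∑ j, s y j * u j = 0 := by
    have h : ∑ j, s y j * u j = (∑ j, s y j * (c j - dotp a y)) / n := by
      rw [Finset.sum_div]
      exact Finset.sum_congr rfl fun j _ => by simp only [hu]; ring
    rw [h]
    have h2 : ∑ j, s y j * (c j - dotp a y) = 0 := by
      simp only [mul_sub, Finset.sum_sub_distrib, ← Finset.sum_mul, hs_sum y hy, ← hcy]
      ring
    rw [h2, zero_div]
  have hexpδ : ∑ j, s y j * Real.exp (u j) = 1 + δ := by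
    have : δ = (∑ j, s y j * Real.exp (u j)) - (∑ j, s y j) - ∑ j, s y j * u j := by
      rw [hδ, ← Finset.sum_sub_distrib, ← Finset.sum_sub_distrib]
      refine Finset.sum_congr rfl fun j _ => by ring
    rw [hsumu, hs_sum y hy] at this
    linarith
  have hkey : bezier x s (fun z => Real.exp (dotp a z)) n y
      = Real.exp (dotp a y) * (1 + δ) ^ n := by
    rw [bezier_exp]
    have h1 : ∀ j, s y j * Real.exp (c j / n)
        = Real.exp (dotp a y / n) * (s y j * Real.exp (u j)) := by
      intro j
      rw [hu]
      rw [show (c j) / (n:ℝ) = dotp a y / n + (c j - dotp a y)/n by ring, Real.exp_add]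
      ring
    have h1' : ∀ j, s y j * Real.exp (dotp a (x j) / n)
        = Real.exp (dotp a y / n) * (s y j * Real.exp (u j)) := h1
    simp_rw [h1']
    rw [← Finset.mul_sum, hexpδ, mul_pow, ← Real.exp_nat_mul]
    congr 2
    field_simp
  rw [hkey]
  have hepos := Real.exp_pos (dotp a y)
  have h1δ : (1:ℝ) ≤ (1 + δ) ^ n := by
    have h01 : (1:ℝ) ≤ 1 + δ := by linarith
    calc (1:ℝ) = 1 ^ n := (one_pow n).symm
      _ ≤ (1 + δ) ^ n := pow_le_pow_left₀ zero_le_one h01 n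
  have hnd : (n:ℝ) * δ ≤ R ^ 2 / n := by
    have h := mul_le_mul_of_nonneg_left hδle hnpos.le
    calc (n:ℝ) * δ ≤ (n:ℝ) * (R ^ 2 / (n:ℝ) ^ 2) := h
      _ = R ^ 2 / n := by field_simp
  have hnd2 : (n:ℝ) * δ ≤ R ^ 2 := hnd.trans (div_le_self (by positivity) hn1)
  have hndnn : (0:ℝ) ≤ (n:ℝ) * δ := by positivity
  have hpow : (1 + δ) ^ n ≤ Real.exp ((n:ℝ) * δ) := by
    calc (1 + δ) ^ n ≤ (Real.exp δ) ^ n :=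
          pow_le_pow_left₀ (by linarith) (by linarith [Real.add_one_le_exp δ]) n
      _ = Real.exp ((n:ℝ) * δ) := (Real.exp_nat_mul δ n).symm
  have hfin : (1 + δ) ^ n - 1 ≤ R ^ 2 * Real.exp (R ^ 2) / n := by
    have h2 := exp_sub_one_le' (t := (n:ℝ) * δ)
    have h3 : (n:ℝ) * δ * Real.exp ((n:ℝ) * δ) ≤ R ^ 2 / n * Real.exp (R ^ 2) :=
      mul_le_mul hnd (Real.exp_le_exp.mpr hnd2) (Real.exp_pos _).le (by positivity)
    calc (1 + δ) ^ n - 1 ≤ Real.exp ((n:ℝ) * δ) - 1 := by linarith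
      _ ≤ (n:ℝ) * δ * Real.exp ((n:ℝ) * δ) := h2
      _ ≤ R ^ 2 / n * Real.exp (R ^ 2) := h3
      _ = R ^ 2 * Real.exp (R ^ 2) / n := by ring
  have heq : |Real.exp (dotp a y) * (1 + δ) ^ n - Real.exp (dotp a y)| / Real.exp (dotp a y)
      = (1 + δ) ^ n - 1 := by
    rw [abs_of_nonneg (by nlinarith)]
    field_simp
  rw [heq, zero_div, add_zero]
  exact hfin
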